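/- For any b ≥ 0, the set {(c, e) ∈ ℝ³ × ℝ³ : c · e = 0 and ‖c‖ > b} (with subspace topology from ℝ⁶) is homeomorphic to the product of the tangent bundle of the 2-sphere with the open interval (b, ∞). -/

import Mathlib

noncomputable abbrev E3 := EuclideanSpace ℝ (Fin 3)

/-- The tangent bundle of the unit 2-sphere, realized in ℝ³ × ℝ³. -/
def TS2 : Set (E3 × E3) := {x | ‖x.1‖ = 1 ∧ inner ℝ x.1 x.2 = (0 : ℝ)}

/-- The space of curvilinear Keplerian orbits with angular momentum greater than b. -/
def Horb (b : ℝ) : Set (E3 × E3) := {x | inner ℝ x.1 x.2 = (0 : ℝ) ∧ ‖x.1‖ > b}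

theorem stmt0 (b : ℝ) (hb : 0 ≤ b) :
    Nonempty (Horb b ≃ₜ TS2 × Set.Ioi b) := by
  have hne : ∀ x : Horb b, ‖(x : E3 × E3).1‖ ≠ 0 := fun x =>
    ne_of_gt (lt_of_le_of_lt hb x.2.2)
  refine ⟨{
    toFun := fun x => (⟨(‖(x : E3 × E3).1‖⁻¹ • (x : E3 × E3).1, (x : E3 × E3).2),
        by
          constructor
          · rw [norm_smul, norm_inv, norm_norm, inv_mul_cancel₀ (hne x)]
          · rw [inner_smul_left]
            simp [x.2.1]⟩,
      ⟨‖(x : E3 × E3).1‖, x.2.2⟩)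
    invFun := fun y => ⟨((y.2 : ℝ) • (y.1 : E3 × E3).1, (y.1 : E3 × E3).2),
      by
        constructor
        · rw [inner_smul_left]
          simp [y.1.2.2]
        · rw [norm_smul, y.1.2.1, mul_one, Real.norm_eq_abs,
            abs_of_pos (lt_of_le_of_lt hb y.2.2)]
          exact y.2.2⟩
    left_inv := fun x => by
      apply Subtype.ext
      simp only [smul_smul]
      rw [mul_inv_cancel₀ (hne x), one_smul]
    right_inv := fun y => by
      have hr : (0:ℝ) < (y.2 : ℝ) := lt_of_le_of_lt hb y.2.2
      have hn : ‖(y.2 : ℝ) • (y.1 : E3 × E3).1‖ = (y.2 : ℝ) := by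
        rw [norm_smul, y.1.2.1, mul_one, Real.norm_eq_abs, abs_of_pos hr]
      refine Prod.ext (Subtype.ext ?_) (Subtype.ext hn)
      show (‖(y.2 : ℝ) • (y.1 : E3 × E3).1‖⁻¹ • ((y.2 : ℝ) • (y.1 : E3 × E3).1),
        (y.1 : E3 × E3).2) = (y.1 : E3 × E3)
      rw [hn, smul_smul, inv_mul_cancel₀ (ne_of_gt hr), one_smul]
    continuous_toFun := by
      apply Continuous.prodMk
      · apply Continuous.subtype_mk
        apply Continuous.prodMk
        · exact ((continuous_norm.comp
            (continuous_fst.comp continuous_subtype_val)).inv₀ hne).smul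
            (continuous_fst.comp continuous_subtype_val)
        · exact continuous_snd.comp continuous_subtype_val
      · exact (continuous_norm.comp (continuous_fst.comp continuous_subtype_val)).subtype_mk _
    continuous_invFun := by
      apply Continuous.subtype_mk
      apply Continuous.prodMk
      · exact (continuous_subtype_val.comp continuous_snd).smul
          (continuous_fst.comp (continuous_subtype_val.comp continuous_fst))
      · exact continuous_snd.comp (continuous_subtype_val.comp continuous_fst)
  }⟩
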